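/- Ancestry criterion via projections (Proposition 5.1, first claim). Let G be a DAG on [d], let H ∈ ℝ^{d×n} (n ≥ d) have full row rank with rows h_1,…,h_d, and let {B_k}_{k∈[K]} be a family of d×d real matrices with (B_k)_{ij} ≠ 0 ⟺ j ∈ \bar{pa}_G(i) that is node-level non-degenerate with respect to G. Set M_k = B_k H. Let S ⊆ [d] be an ancestral set and i ∉ S. For each k ∈ [K] let W_k = span{(M_k)_s : s ∈ S} ⊆ ℝ^n and let q_k be the orthogonal projection (with respect to the standard inner product on ℝ^n) of the i-th row (M_k)_i onto the orthogonal complement W_k^⊥. Then dim span{q_k : k ∈ [K]} = 1 if and only if ans_G(i) ⊆ S. -/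

import Mathlib

open Matrix MeasureTheory

/-- `E i j` means there is a directed edge `i → j`. A DAG has no directed cycles. -/
def IsDAG {d : ℕ} (E : Fin d → Fin d → Prop) : Prop :=
  ∀ i, ¬ Relation.TransGen E i i

/-- The set of parents of `i`. -/
def pa {d : ℕ} (E : Fin d → Fin d → Prop) (i : Fin d) : Set (Fin d) := {j | E j i}

/-- The set of children of `i`. -/
def ch {d : ℕ} (E : Fin d → Fin d → Prop) (i : Fin d) : Set (Fin d) := {j | E i j}

/-- `pa_G(i) ∪ {i}`. -/
def barPa {d : ℕ} (E : Fin d → Fin d → Prop) (i : Fin d) : Set (Fin d) := insert i (pa E i)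

/-- `ch_G(i) ∪ {i}`. -/
def barCh {d : ℕ} (E : Fin d → Fin d → Prop) (i : Fin d) : Set (Fin d) := insert i (ch E i)

/-- The effect-domination set `dom_G(i) = {j ∈ pa_G(i) : ch_G(i) ⊆ ch_G(j)}`. -/
def domSet {d : ℕ} (E : Fin d → Fin d → Prop) (i : Fin d) : Set (Fin d) :=
  {j | j ∈ pa E i ∧ ch E i ⊆ ch E j}

/-- `dom_G(i) ∪ {i}`. -/
def barDom {d : ℕ} (E : Fin d → Fin d → Prop) (i : Fin d) : Set (Fin d) :=
  insert i (domSet E i)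

/-- Ancestors of `i`: nodes with a directed path to `i`. -/
def ans {d : ℕ} (E : Fin d → Fin d → Prop) (i : Fin d) : Set (Fin d) :=
  {j | Relation.TransGen E j i}

/-- A set is ancestral if it is closed under taking ancestors. -/
def Ancestral {d : ℕ} (E : Fin d → Fin d → Prop) (S : Set (Fin d)) : Prop :=
  ∀ j ∈ S, ans E j ⊆ S

/-- The support of `B` matches the graph: `B i j ≠ 0 ↔ j ∈ \bar{pa}_G(i)`. -/
def SupportMatches {d : ℕ} (E : Fin d → Fin d → Prop) (B : Matrix (Fin d) (Fin d) ℝ) : Prop :=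
  ∀ i j, B i j ≠ 0 ↔ j ∈ barPa E i

/-- Node-level non-degeneracy: for every node `i`, the span of the `i`-th rows
`(B_k)_i` has dimension `|pa_G(i)| + 1`. -/
def NodeNonDegenerate {d K : ℕ} (E : Fin d → Fin d → Prop)
    (B : Fin K → Matrix (Fin d) (Fin d) ℝ) : Prop :=
  ∀ i, Module.finrank ℝ (Submodule.span ℝ (Set.range fun k => B k i)) = (pa E i).ncard + 1

/-- View a row vector in `ℝ^n` as an element of Euclidean space. -/
noncomputable def toE {n : ℕ} (v : Fin n → ℝ) : EuclideanSpace ℝ (Fin n) :=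
  (WithLp.equiv 2 (Fin n → ℝ)).symm v

/-- Orthogonal projection of `v` onto the orthogonal complement `W^⊥`. -/
noncomputable def projPerp {n : ℕ} (W : Submodule ℝ (EuclideanSpace ℝ (Fin n)))
    (v : EuclideanSpace ℝ (Fin n)) : EuclideanSpace ℝ (Fin n) :=
  (Submodule.orthogonalProjectionOnto Wᗮ v : EuclideanSpace ℝ (Fin n))

lemma mem_span_of_coeff_support {ι : Type*} [Fintype ι] {M : Type*} [AddCommGroup M]
    [Module ℝ M] (c : ι → ℝ) (v : ι → M) (T : Set ι) (hc : ∀ j ∉ T, c j = 0) :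
    (∑ j, c j • v j) ∈ Submodule.span ℝ (v '' T) := by
  refine Submodule.sum_mem _ fun j _ => ?_
  by_cases hj : j ∈ T
  · exact Submodule.smul_mem _ _ (Submodule.subset_span ⟨j, hj, rfl⟩)
  · rw [hc j hj, zero_smul]; exact Submodule.zero_mem _

lemma coeff_zero_of_mem_span {d' : ℕ} {M : Type*} [AddCommGroup M] [Module ℝ M]
    {h : Fin d' → M} (hLI : LinearIndependent ℝ h) (S : Set (Fin d')) (c : Fin d' → ℝ)
    (hmem : (∑ j, c j • h j) ∈ Submodule.span ℝ (h '' S)) : ∀ j ∉ S, c j = 0 := by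
  classical
  haveI : Fintype ↥S := (Set.toFinite S).fintype
  rw [Set.image_eq_range] at hmem
  obtain ⟨c', hc'⟩ := (Submodule.mem_span_range_iff_exists_fun ℝ).mp hmem
  set c'' : Fin d' → ℝ := fun j => if hj : j ∈ S then c' ⟨j, hj⟩ else 0 with hc''def
  have hsum : ∑ j, c'' j • h j = ∑ s : ↥S, c' s • h ↑s := by
    rw [← Finset.sum_subset (Finset.subset_univ S.toFinset)
      (fun x _ hx => by
        rw [show c'' x = 0 from dif_neg (by simpa using hx), zero_smul])]
    rw [Finset.sum_subtype (s := S.toFinset) (p := (· ∈ S)) (fun x => Set.mem_toFinset)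
      (fun j => c'' j • h j)]
    refine Finset.sum_congr rfl fun s _ => ?_
    rw [show c'' ↑s = c' s from dif_pos s.2]
  have hz : ∑ j, (c j - c'' j) • h j = 0 := by
    simp only [sub_smul, Finset.sum_sub_distrib, hc', hsum, sub_self]
  intro j hj
  have := Fintype.linearIndependent_iff.mp hLI _ hz j
  have hc''j : c'' j = 0 := dif_neg hj
  linarith [this, hc''j]

theorem ancestry_criterion_via_projections
    {d n K : ℕ} (hn : d ≤ n)
    (E : Fin d → Fin d → Prop) (hG : IsDAG E)
    (H : Matrix (Fin d) (Fin n) ℝ) (hH : H.rank = d)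
    (B : Fin K → Matrix (Fin d) (Fin d) ℝ)
    (hsupp : ∀ k, SupportMatches E (B k))
    (hnd : NodeNonDegenerate E B)
    (S : Set (Fin d)) (hS : Ancestral E S) (i : Fin d) (hi : i ∉ S) :
    Module.finrank ℝ (Submodule.span ℝ (Set.range fun k : Fin K =>
        projPerp (Submodule.span ℝ ((fun s => toE ((B k * H) s)) '' S))
          (toE ((B k * H) i)))) = 1
      ↔ ans E i ⊆ S := by
  classical
  set h : Fin d → EuclideanSpace ℝ (Fin n) := fun j => toE (H j) with hhdef
  -- linear independence of the rows of H
  have hLIrow : LinearIndependent ℝ (fun j => H j) := by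
    rw [linearIndependent_iff_card_eq_finrank_span]
    rw [Set.finrank, show (Set.range fun j => H j) = Set.range H.row from rfl,
      ← Matrix.rank_eq_finrank_span_row, hH, Fintype.card_fin]
  have hLI : LinearIndependent ℝ h := by
    have heq : h = ((WithLp.linearEquiv 2 ℝ (Fin n → ℝ)).symm : (Fin n → ℝ) →ₗ[ℝ] _) ∘
        (fun j => H j) := rfl
    rw [heq]
    exact hLIrow.map' _ (LinearEquiv.ker _)
  -- the row formula
  have hrow : ∀ (A : Matrix (Fin d) (Fin d) ℝ) (s : Fin d),
      toE ((A * H) s) = ∑ j, A s j • h j := by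
    intro A s
    ext m
    have h1 : (∑ j, A s j • h j) m = ∑ j, A s j * H j m := by
      rw [WithLp.ofLp_sum, Finset.sum_apply]; rfl
    show (A * H) s m = (∑ j, A s j • h j) m
    rw [h1, Matrix.mul_apply]
  set WS : Submodule ℝ (EuclideanSpace ℝ (Fin n)) := Submodule.span ℝ (h '' S) with hWSdef
  -- P = projection onto WSᗮ, as a linear map
  set P : EuclideanSpace ℝ (Fin n) →ₗ[ℝ] EuclideanSpace ℝ (Fin n) :=
    (WSᗮ).subtype ∘ₗ (Submodule.orthogonalProjectionOnto WSᗮ).toLinearMap with hPdef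
  have hPapp : ∀ v, P v = projPerp WS v := fun v => rfl
  set Φ : (Fin d → ℝ) →ₗ[ℝ] EuclideanSpace ℝ (Fin n) :=
    P ∘ₗ (Fintype.linearCombination ℝ h) with hΦdef
  have hΦapp : ∀ c : Fin d → ℝ, Φ c = P (∑ j, c j • h j) := fun c => rfl
  have hΦsum : ∀ c : Fin d → ℝ, Φ c = ∑ j, c j • P (h j) := by
    intro c
    rw [hΦapp, map_sum]
    exact Finset.sum_congr rfl fun j _ => P.map_smul _ _
  have hsingle : ∀ j : Fin d, ∑ m, (Pi.single j 1 : Fin d → ℝ) m • h m = h j := by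
    intro j
    rw [Finset.sum_eq_single j]
    · simp
    · intro m _ hm; rw [Pi.single_eq_of_ne hm, zero_smul]
    · intro hm; exact absurd (Finset.mem_univ j) hm
  have hΦsingle : ∀ j : Fin d, Φ (Pi.single j (1 : ℝ)) = P (h j) := by
    intro j
    rw [hΦapp, hsingle]
  -- kernel characterisation of P
  have hPker : ∀ v, P v = 0 ↔ v ∈ WS := by
    intro v
    rw [hPapp]
    unfold projPerp
    rw [ZeroMemClass.coe_eq_zero, Submodule.orthogonalProjectionOnto_eq_zero_iff,
      Submodule.orthogonal_orthogonal]
  have hp0 : ∀ j ∈ S, P (h j) = 0 := fun j hj =>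
    (hPker _).mpr (Submodule.subset_span ⟨j, hj, rfl⟩)
  have hpne : ∀ j ∉ S, P (h j) ≠ 0 := by
    intro j hj h0
    have hmem : (∑ m, (Pi.single j 1 : Fin d → ℝ) m • h m) ∈ WS := by
      rw [hsingle]; exact (hPker _).mp h0
    have := coeff_zero_of_mem_span hLI S _ hmem j hj
    simp at this
  -- parents of elements of S are again in S
  have hbarPaS : ∀ s ∈ S, ∀ j ∈ barPa E s, j ∈ S := by
    intro s hs j hj
    rcases hj with rfl | hj
    · exact hs
    · exact hS s hs (Relation.TransGen.single hj)
  -- well-foundedness of ancestry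
  haveI : IsTrans (Fin d) (Relation.TransGen E) := ⟨fun _ _ _ => Relation.TransGen.trans⟩
  haveI : IsIrrefl (Fin d) (Relation.TransGen E) := ⟨hG⟩
  have wf : WellFounded (Relation.TransGen E) :=
    Finite.wellFounded_of_trans_of_irrefl _
  -- the span of the rows of M_k over S is WS, independently of k
  have spanEq : ∀ k, Submodule.span ℝ ((fun s => toE ((B k * H) s)) '' S) = WS := by
    intro k
    apply le_antisymm
    · rw [Submodule.span_le]
      rintro x ⟨s, hs, rfl⟩
      show toE ((B k * H) s) ∈ WS
      rw [hrow]
      exact mem_span_of_coeff_support _ _ _ (fun j hj => by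
        by_contra hne
        exact hj (hbarPaS s hs j ((hsupp k s j).mp hne)))
    · rw [hWSdef, Submodule.span_le]
      rintro x ⟨s, hs, rfl⟩
      revert hs
      refine WellFounded.induction wf (C := fun s => s ∈ S →
        h s ∈ Submodule.span ℝ ((fun s => toE ((B k * H) s)) '' S)) s ?_
      intro t IH ht
      have hMt : toE ((B k * H) t) ∈ Submodule.span ℝ ((fun s => toE ((B k * H) s)) '' S) :=
        Submodule.subset_span ⟨t, ht, rfl⟩
      have hsum : (∑ j ∈ Finset.univ.erase t, B k t j • h j) ∈
          Submodule.span ℝ ((fun s => toE ((B k * H) s)) '' S) := by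
        refine Submodule.sum_mem _ fun j hj => ?_
        rcases eq_or_ne (B k t j) 0 with h0 | h0
        · rw [h0, zero_smul]; exact Submodule.zero_mem _
        · have hjp : j ∈ barPa E t := (hsupp k t j).mp h0
          have hjne : j ≠ t := Finset.ne_of_mem_erase hj
          have hjpa : E j t := by
            rcases hjp with rfl | hjp
            · exact absurd rfl hjne
            · exact hjp
          exact Submodule.smul_mem _ _
            (IH j (Relation.TransGen.single hjpa) (hS t ht (Relation.TransGen.single hjpa)))
      have hBtt : B k t t ≠ 0 := (hsupp k t t).mpr (Set.mem_insert _ _)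
      have heq : h t = (B k t t)⁻¹ •
          (toE ((B k * H) t) - ∑ j ∈ Finset.univ.erase t, B k t j • h j) := by
        rw [hrow, ← Finset.add_sum_erase _ _ (Finset.mem_univ t), add_sub_cancel_right,
          inv_smul_smul₀ hBtt]
      rw [heq]
      exact Submodule.smul_mem _ _ (Submodule.sub_mem _ hMt hsum)
  -- rewrite the statement through Φ
  have hfun : (fun k : Fin K =>
      projPerp (Submodule.span ℝ ((fun s => toE ((B k * H) s)) '' S)) (toE ((B k * H) i)))
      = fun k => Φ (B k i) := by
    funext k
    rw [spanEq k, hrow]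
    rfl
  rw [hfun]
  have hiBar : ∀ k, B k i i ≠ 0 := fun k => (hsupp k i i).mpr (Set.mem_insert _ _)
  have hK : Nonempty (Fin K) := by
    by_contra hne
    rw [not_nonempty_iff] at hne
    have hrange : (Set.range fun k : Fin K => B k i) = ∅ := Set.range_eq_empty _
    have := hnd i
    rw [hrange, Submodule.span_empty, finrank_bot] at this
    omega
  constructor
  · -- dim = 1 → ans ⊆ S : by contradiction
    intro hdim
    by_contra hans
    -- find a parent of i not in S
    have hex : ∃ j₀, E j₀ i ∧ j₀ ∉ S := by
      by_contra hno
      push_neg at hno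
      apply hans
      intro a ha
      obtain ⟨b, hab, hbi⟩ := Relation.TransGen.tail'_iff.mp ha
      have hbS : b ∈ S := hno b hbi
      rcases Relation.reflTransGen_iff_eq_or_transGen.mp hab with rfl | hab'
      · exact hbS
      · exact hS b hbS hab'
    obtain ⟨j₀, hj₀i, hj₀S⟩ := hex
    have hij₀ : j₀ ≠ i := by
      rintro rfl
      exact hG j₀ (Relation.TransGen.single hj₀i)
    -- the coordinate subspace on barPa i
    set U : Submodule ℝ (Fin d → ℝ) :=
      Submodule.span ℝ ((fun j => Pi.single j (1 : ℝ)) '' (barPa E i)) with hUdef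
    have hiNotPa : i ∉ pa E i := fun hh => hG i (Relation.TransGen.single hh)
    have hLIsingle : LinearIndependent ℝ (fun j : Fin d => Pi.single j (1 : ℝ)) := by
      have := (Pi.basisFun ℝ (Fin d)).linearIndependent
      have heq : (fun j : Fin d => Pi.single j (1 : ℝ)) = ⇑(Pi.basisFun ℝ (Fin d)) := by
        funext j; rw [Pi.basisFun_apply]
      rw [heq]; exact this
    haveI : Fintype ↥(barPa E i) := (Set.toFinite _).fintype
    have hfinU : Module.finrank ℝ U = (pa E i).ncard + 1 := by
      have hli' : LinearIndependent ℝ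
          (fun x : ↥(barPa E i) => (Pi.single (x : Fin d) 1 : Fin d → ℝ)) :=
        hLIsingle.comp ((↑) : ↥(barPa E i) → Fin d) Subtype.val_injective
      rw [hUdef, Set.image_eq_range, finrank_span_eq_card hli']
      rw [← Set.toFinset_card, ← Set.ncard_eq_toFinset_card']
      exact Set.ncard_insert_of_notMem hiNotPa
    have hUle : Submodule.span ℝ (Set.range fun k => B k i) ≤ U := by
      rw [Submodule.span_le]
      rintro x ⟨k, rfl⟩
      show B k i ∈ U
      have hx : B k i = ∑ j, B k i j • (Pi.single j 1 : Fin d → ℝ) := by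
        have h2 : ∀ j : Fin d, B k i j • (Pi.single j 1 : Fin d → ℝ) = Pi.single j (B k i j) := by
          intro j
          rw [← Pi.single_smul, smul_eq_mul, mul_one]
        simp_rw [h2, Finset.univ_sum_single]
      rw [hx]
      exact mem_span_of_coeff_support _ _ _ (fun j hj => by
        by_contra hne
        exact hj ((hsupp k i j).mp hne))
    have hUeq : Submodule.span ℝ (Set.range fun k => B k i) = U :=
      Submodule.eq_of_le_of_finrank_eq hUle (by rw [hnd i, hfinU])
    have hmapspan : Submodule.map Φ (Submodule.span ℝ (Set.range fun k => B k i))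
        = Submodule.span ℝ (Set.range fun k => Φ (B k i)) := by
      rw [Submodule.map_span, ← Set.range_comp]
      rfl
    have hm1 : P (h i) ∈ Submodule.span ℝ (Set.range fun k => Φ (B k i)) := by
      rw [← hmapspan]
      exact ⟨Pi.single i 1, hUeq ▸ Submodule.subset_span
        (Set.mem_image_of_mem _ (Set.mem_insert _ _)), hΦsingle i⟩
    have hm2 : P (h j₀) ∈ Submodule.span ℝ (Set.range fun k => Φ (B k i)) := by
      rw [← hmapspan]
      exact ⟨Pi.single j₀ 1, hUeq ▸ Submodule.subset_span
        (Set.mem_image_of_mem _ (Set.mem_insert_of_mem _ hj₀i)), hΦsingle j₀⟩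
    have hliPair : LinearIndependent ℝ ![P (h i), P (h j₀)] := by
      rw [LinearIndependent.pair_iff]
      intro s t hst
      have h1 : Φ (s • (Pi.single i 1 : Fin d → ℝ) + t • (Pi.single j₀ 1 : Fin d → ℝ)) = 0 := by
        rw [map_add, Φ.map_smul, Φ.map_smul, hΦsingle, hΦsingle]
        exact hst
      have h2 : (∑ j, (s • (Pi.single i 1 : Fin d → ℝ) + t • (Pi.single j₀ 1 : Fin d → ℝ)) j • h j) ∈ WS :=
        (hPker _).mp h1
      have h3 := coeff_zero_of_mem_span hLI S _ h2
      have hsi := h3 i hi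
      have hsj := h3 j₀ hj₀S
      simp only [Pi.add_apply, Pi.smul_apply, Pi.single_eq_same, smul_eq_mul, mul_one,
        Pi.single_eq_of_ne hij₀, Pi.single_eq_of_ne (Ne.symm hij₀), mul_zero, add_zero,
        zero_add] at hsi hsj
      exact ⟨hsi, hsj⟩
    have h2le : 2 ≤ Module.finrank ℝ
        (Submodule.span ℝ (Set.range fun k => Φ (B k i))) := by
      have hcard : Module.finrank ℝ (Submodule.span ℝ (Set.range ![P (h i), P (h j₀)])) = 2 := by
        rw [finrank_span_eq_card hliPair, Fintype.card_fin]
      rw [← hcard]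
      refine Submodule.finrank_mono (Submodule.span_le.mpr ?_)
      rintro x ⟨m, rfl⟩
      fin_cases m
      · exact hm1
      · exact hm2
    omega
  · -- ans ⊆ S → dim = 1
    intro hans
    have hqk : ∀ k, Φ (B k i) = B k i i • P (h i) := by
      intro k
      rw [hΦsum]
      rw [Finset.sum_eq_single i]
      · intro j _ hji
        by_cases hjS : j ∈ S
        · rw [hp0 j hjS, smul_zero]
        · have : B k i j = 0 := by
            by_contra hne
            rcases (hsupp k i j).mp hne with rfl | hjp
            · exact hji rfl
            · exact hjS (hans (Relation.TransGen.single hjp))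
          rw [this, zero_smul]
      · intro hm; exact absurd (Finset.mem_univ i) hm
    have hspan : Submodule.span ℝ (Set.range fun k => Φ (B k i)) = ℝ ∙ P (h i) := by
      apply le_antisymm
      · rw [Submodule.span_le]
        rintro x ⟨k, rfl⟩
        show Φ (B k i) ∈ (ℝ ∙ P (h i))
        rw [hqk]
        exact Submodule.smul_mem _ _ (Submodule.mem_span_singleton_self _)
      · rw [Submodule.span_le, Set.singleton_subset_iff]
        obtain ⟨k₀⟩ := hK
        have : P (h i) = (B k₀ i i)⁻¹ • Φ (B k₀ i) := by
          rw [hqk, inv_smul_smul₀ (hiBar k₀)]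
        rw [this]
        exact Submodule.smul_mem _ _ (Submodule.subset_span ⟨k₀, rfl⟩)
    rw [hspan]
    exact finrank_span_singleton (hpne i hi)
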